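/- For $\alpha \in (-1,\infty)^d$, let $\mu_\alpha$ be the measure on $(0,\infty)^d$ with density $x_1^{2\alpha_1+1}\cdots x_d^{2\alpha_d+1}$ with respect to Lebesgue measure. Then there exist constants $0 < c \le C$ depending only on $d$ and $\alpha$ such that for all $x \in (0,\infty)^d$ and $r > 0$, $c\, r^d \prod_{i=1}^d (x_i+r)^{2\alpha_i+1} \le \mu_\alpha(B(x,r) \cap (0,\infty)^d) \le C\, r^d \prod_{i=1}^d (x_i+r)^{2\alpha_i+1}$, where $B(x,r)$ is the Euclidean ball. -/

import Mathlib

open MeasureTheory Set ENNReal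



lemma comp_low (p K u v : ℝ) (hK : 1 ≤ K) (hu : 0 < u) (huv : u ≤ v) (hvK : v ≤ K * u) :
    K ^ (-|p|) * v ^ p ≤ u ^ p := by
  have hK0 : (0:ℝ) < K := lt_of_lt_of_le one_pos hK
  have hv : 0 < v := lt_of_lt_of_le hu huv
  rcases le_or_gt 0 p with hp | hp
  · rw [abs_of_nonneg hp]
    have h1 : (v / K) ^ p ≤ u ^ p :=
      Real.rpow_le_rpow (by positivity) ((div_le_iff₀ hK0).mpr (by linarith [hvK])) hp
    calc K ^ (-p) * v ^ p = (v / K) ^ p := by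
          rw [Real.div_rpow hv.le hK0.le, Real.rpow_neg hK0.le]; ring
      _ ≤ u ^ p := h1
  · rw [abs_of_neg hp, neg_neg]
    have h1 : v ^ p ≤ u ^ p := Real.rpow_le_rpow_of_nonpos hu huv hp.le
    have h2 : K ^ p ≤ 1 := Real.rpow_le_one_of_one_le_of_nonpos hK hp.le
    calc K ^ p * v ^ p ≤ 1 * v ^ p := by
          exact mul_le_mul_of_nonneg_right h2 (Real.rpow_nonneg hv.le p)
      _ = v ^ p := one_mul _
      _ ≤ u ^ p := h1

lemma comp_up (p K u v : ℝ) (hK : 1 ≤ K) (hu : 0 < u) (huv : u ≤ v) (hvK : v ≤ K * u) :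
    u ^ p ≤ K ^ |p| * v ^ p := by
  have hK0 : (0:ℝ) < K := lt_of_lt_of_le one_pos hK
  have hv : 0 < v := lt_of_lt_of_le hu huv
  rcases le_or_gt 0 p with hp | hp
  · rw [abs_of_nonneg hp]
    have h1 : u ^ p ≤ v ^ p := Real.rpow_le_rpow hu.le huv hp
    have h2 : (1:ℝ) ≤ K ^ p := Real.one_le_rpow hK hp
    nlinarith [Real.rpow_nonneg hv.le p]
  · rw [abs_of_neg hp]
    have h1 : u ^ p ≤ (v / K) ^ p := by
      apply Real.rpow_le_rpow_of_nonpos (by positivity) _ hp.le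
      exact (div_le_iff₀ hK0).mpr (by linarith)
    calc u ^ p ≤ (v / K) ^ p := h1
      _ = K ^ (-p) * v ^ p := by
          rw [Real.div_rpow hv.le hK0.le, Real.rpow_neg hK0.le]; ring


lemma lint_Ioo (p : ℝ) (hp : -1 < p) (b : ℝ) (hb : 0 < b) :
    ∫⁻ t in Set.Ioo 0 b, ENNReal.ofReal (t ^ p) = ENNReal.ofReal (b ^ (p + 1) / (p + 1)) := by
  have hint : IntegrableOn (fun t : ℝ => t ^ p) (Set.Ioo 0 b) volume :=
    ((intervalIntegral.intervalIntegrable_rpow' hp (a := 0) (b := b)).1).mono_set Set.Ioo_subset_Ioc_self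
  have hnn : 0 ≤ᵐ[volume.restrict (Set.Ioo 0 b)] fun t : ℝ => t ^ p :=
    (ae_restrict_iff' measurableSet_Ioo).mpr
      (Filter.Eventually.of_forall fun t ht => Real.rpow_nonneg ht.1.le p)
  rw [← ofReal_integral_eq_lintegral_ofReal hint hnn]
  congr 1
  rw [← MeasureTheory.integral_Ioc_eq_integral_Ioo,
    ← intervalIntegral.integral_of_le hb.le, integral_rpow (Or.inl hp),
    Real.zero_rpow (by linarith)]
  ring

lemma oneD (p : ℝ) (hp : -1 < p) :
    ∃ c C : ℝ, 0 < c ∧ c ≤ C ∧ ∀ x s : ℝ, 0 < x → 0 < s →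
      ENNReal.ofReal (c * s * (x + s) ^ p) ≤
        (∫⁻ t in Set.Ioo (x - s) (x + s) ∩ Set.Ioi 0, ENNReal.ofReal (t ^ p)) ∧
      (∫⁻ t in Set.Ioo (x - s) (x + s) ∩ Set.Ioi 0, ENNReal.ofReal (t ^ p)) ≤
        ENNReal.ofReal (C * s * (x + s) ^ p) := by
  have hp1 : (0:ℝ) < p + 1 := by linarith
  set c₀ : ℝ := 2 ^ (-|p|) / 2 with hc₀
  set C₀ : ℝ := max (3 / (p + 1)) (2 * 3 ^ |p|) with hC₀
  have hc₀pos : 0 < c₀ := by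
    have : (0:ℝ) < (2:ℝ) ^ (-|p|) := Real.rpow_pos_of_pos two_pos _
    positivity
  have hC₀pos : 0 < C₀ := lt_max_of_lt_left (by positivity)
  refine ⟨min c₀ C₀, C₀, lt_min hc₀pos hC₀pos, min_le_right _ _, ?_⟩
  intro x s hx hs
  have hb : 0 < x + s := by linarith
  have hmeas : Measurable fun t : ℝ => ENNReal.ofReal (t ^ p) :=
    by fun_prop
  constructor
  · -- lower bound
    have hJsub : Set.Ioo (x + s / 2) (x + s) ⊆ Set.Ioo (x - s) (x + s) ∩ Set.Ioi 0 := by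
      intro t ht
      exact ⟨⟨by linarith [ht.1], ht.2⟩, by simp only [Set.mem_Ioi]; linarith [ht.1]⟩
    have hpt : ∀ t ∈ Set.Ioo (x + s / 2) (x + s),
        ENNReal.ofReal ((2:ℝ) ^ (-|p|) * (x + s) ^ p) ≤ ENNReal.ofReal (t ^ p) := by
      intro t ht
      apply ENNReal.ofReal_le_ofReal
      exact comp_low p 2 t (x + s) one_le_two (by linarith [ht.1]) ht.2.le (by linarith [ht.1])
    calc ENNReal.ofReal (min c₀ C₀ * s * (x + s) ^ p)
        ≤ ENNReal.ofReal (c₀ * s * (x + s) ^ p) := by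
          apply ENNReal.ofReal_le_ofReal
          have : (0:ℝ) ≤ s * (x + s) ^ p := by positivity
          nlinarith [min_le_left c₀ C₀]
      _ = ENNReal.ofReal ((2:ℝ) ^ (-|p|) * (x + s) ^ p) * ENNReal.ofReal (s / 2) := by
          rw [← ENNReal.ofReal_mul (by positivity)]
          congr 1; rw [hc₀]; ring
      _ = ∫⁻ _ in Set.Ioo (x + s / 2) (x + s),
            ENNReal.ofReal ((2:ℝ) ^ (-|p|) * (x + s) ^ p) := by
          rw [setLIntegral_const, Real.volume_Ioo]
          congr 1; congr 1; ring
      _ ≤ ∫⁻ t in Set.Ioo (x + s / 2) (x + s), ENNReal.ofReal (t ^ p) :=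
          setLIntegral_mono hmeas hpt
      _ ≤ ∫⁻ t in Set.Ioo (x - s) (x + s) ∩ Set.Ioi 0, ENNReal.ofReal (t ^ p) :=
          lintegral_mono_set hJsub
  · -- upper bound
    rcases le_or_gt x (2 * s) with hxs | hxs
    · -- x ≤ 2s : compare with full integral on (0, x+s)
      calc (∫⁻ t in Set.Ioo (x - s) (x + s) ∩ Set.Ioi 0, ENNReal.ofReal (t ^ p))
          ≤ ∫⁻ t in Set.Ioo 0 (x + s), ENNReal.ofReal (t ^ p) := by
            apply lintegral_mono_set
            rintro t ⟨⟨_, h2⟩, h3⟩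
            exact ⟨h3, h2⟩
        _ = ENNReal.ofReal ((x + s) ^ (p + 1) / (p + 1)) := lint_Ioo p hp _ hb
        _ ≤ ENNReal.ofReal (C₀ * s * (x + s) ^ p) := by
            apply ENNReal.ofReal_le_ofReal
            have h1 : (x + s) ^ (p + 1) = (x + s) ^ p * (x + s) := by
              rw [Real.rpow_add hb, Real.rpow_one]
            have h2 : (0:ℝ) ≤ (x + s) ^ p := (Real.rpow_pos_of_pos hb p).le
            have h3 : x + s ≤ 3 * s := by linarith
            have h4 : 3 / (p + 1) ≤ C₀ := le_max_left _ _
            rw [h1, div_le_iff₀ hp1]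
            have h5 : 3 ≤ C₀ * (p + 1) := (div_le_iff₀ hp1).mp h4
            nlinarith [mul_nonneg (mul_nonneg hs.le h2) (sub_nonneg.mpr h5)]
    · -- x > 2s : density comparable on the interval
      have ha : 0 < x - s := by linarith
      have hsub : Set.Ioo (x - s) (x + s) ∩ Set.Ioi 0 ⊆ Set.Ioo (x - s) (x + s) :=
        Set.inter_subset_left
      calc (∫⁻ t in Set.Ioo (x - s) (x + s) ∩ Set.Ioi 0, ENNReal.ofReal (t ^ p))
          ≤ ∫⁻ t in Set.Ioo (x - s) (x + s), ENNReal.ofReal (t ^ p) :=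
            lintegral_mono_set hsub
        _ ≤ ∫⁻ _ in Set.Ioo (x - s) (x + s),
              ENNReal.ofReal ((3:ℝ) ^ |p| * (x + s) ^ p) := by
            apply setLIntegral_mono measurable_const
            intro t ht
            apply ENNReal.ofReal_le_ofReal
            exact comp_up p 3 t (x + s) (by norm_num) (by linarith [ht.1]) (by linarith [ht.2])
              (by linarith [ht.1])
        _ = ENNReal.ofReal ((3:ℝ) ^ |p| * (x + s) ^ p) * ENNReal.ofReal (2 * s) := by
            rw [setLIntegral_const, Real.volume_Ioo]
            congr 1; congr 1; ring
        _ ≤ ENNReal.ofReal (C₀ * s * (x + s) ^ p) := by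
            rw [← ENNReal.ofReal_mul (by positivity)]
            apply ENNReal.ofReal_le_ofReal
            have h2 : (0:ℝ) ≤ (x + s) ^ p := (Real.rpow_pos_of_pos hb p).le
            have h4 : 2 * 3 ^ |p| ≤ C₀ := le_max_right _ _
            nlinarith [mul_nonneg (mul_nonneg hs.le h2) (sub_nonneg.mpr h4)]


lemma lintegral_pi_prod : ∀ (n : ℕ) (μ : Fin n → Measure ℝ), (∀ i, SigmaFinite (μ i)) →
    ∀ (g : Fin n → ℝ → ℝ≥0∞), (∀ i, Measurable (g i)) →
    ∫⁻ y, (∏ i, g i (y i)) ∂(Measure.pi μ) = ∏ i, ∫⁻ t, g i t ∂(μ i) := by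
  intro n
  induction n with
  | zero =>
    intro μ _ g _
    simp [lintegral_const, Measure.pi_univ]
  | succ n ih =>
    intro μ hμ g hg
    have := hμ
    have mp := measurePreserving_piFinSuccAbove μ 0
    set e := MeasurableEquiv.piFinSuccAbove (fun _ : Fin (n+1) => ℝ) 0 with he
    have hG : Measurable fun z : ℝ × (Fin n → ℝ) =>
        g 0 z.1 * ∏ j : Fin n, g (Fin.succ j) (z.2 j) := by
      apply Measurable.mul (by exact (hg 0).comp measurable_fst)
      apply Measurable.comp (f := fun z : ℝ × (Fin n → ℝ) => z.2)
        (g := fun b : Fin n → ℝ => ∏ j, g (Fin.succ j) (b j))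
      · exact Finset.measurable_prod _ fun j _ => (hg _).comp (measurable_pi_apply j)
      · exact measurable_snd
    calc ∫⁻ y, (∏ i, g i (y i)) ∂(Measure.pi μ)
        = ∫⁻ y, (fun z : ℝ × (Fin n → ℝ) =>
            g 0 z.1 * ∏ j : Fin n, g (Fin.succ j) (z.2 j)) (e y) ∂(Measure.pi μ) := by
          apply lintegral_congr
          intro y
          simp only [he, MeasurableEquiv.piFinSuccAbove]
          rw [Fin.prod_univ_succ]
          congr 1
      _ = ∫⁻ z, (g 0 z.1 * ∏ j : Fin n, g (Fin.succ j) (z.2 j))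
            ∂((μ 0).prod (Measure.pi fun j => μ ((0 : Fin (n+1)).succAbove j))) := by
          rw [← mp.lintegral_comp hG]
      _ = (∫⁻ t, g 0 t ∂(μ 0)) * ∫⁻ b, (∏ j : Fin n, g (Fin.succ j) (b j))
            ∂(Measure.pi fun j => μ ((0 : Fin (n+1)).succAbove j)) :=
          lintegral_prod_mul ((hg 0).aemeasurable)
            ((Finset.measurable_prod _ fun j _ => (hg _).comp (measurable_pi_apply j)).aemeasurable)
      _ = (∫⁻ t, g 0 t ∂(μ 0)) * ∏ j : Fin n, ∫⁻ t, g (Fin.succ j) t ∂(μ (Fin.succ j)) := by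
          congr 1
          have h0 : (fun j : Fin n => μ ((0 : Fin (n+1)).succAbove j)) = fun j => μ (Fin.succ j) := by
            funext j; rw [Fin.succAbove_zero]
          rw [h0]
          exact ih _ (fun j => hμ _) _ (fun j => hg _)
      _ = ∏ i, ∫⁻ t, g i t ∂(μ i) := by rw [Fin.prod_univ_succ]

lemma box_eval (n : ℕ) (g : Fin n → ℝ → ℝ≥0∞) (hg : ∀ i, Measurable (g i))
    (t : Fin n → Set ℝ) (ht : ∀ i, MeasurableSet (t i)) :
    ∫⁻ y in Set.univ.pi t, (∏ i, g i (y i)) ∂(volume : Measure (Fin n → ℝ)) =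
      ∏ i, ∫⁻ u in t i, g i u := by
  have hB : MeasurableSet (Set.univ.pi t) := MeasurableSet.univ_pi ht
  rw [← lintegral_indicator hB]
  have hfun : (Set.univ.pi t).indicator (fun y => ∏ i, g i (y i)) =
      fun y => ∏ i, (t i).indicator (g i) (y i) := by
    funext y
    by_cases hy : y ∈ Set.univ.pi t
    · rw [Set.indicator_of_mem hy]
      exact Finset.prod_congr rfl fun i _ =>
        (Set.indicator_of_mem (hy i (Set.mem_univ i)) (g i)).symm
    · rw [Set.indicator_of_notMem hy]
      rw [Set.mem_univ_pi] at hy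
      push_neg at hy
      obtain ⟨i, hi⟩ := hy
      exact (Finset.prod_eq_zero (Finset.mem_univ i)
        (Set.indicator_of_notMem hi (g i))).symm
  rw [hfun, MeasureTheory.volume_pi,
    lintegral_pi_prod n _ (fun _ => inferInstance) _ (fun i => (hg i).indicator (ht i))]
  exact Finset.prod_congr rfl fun i _ => lintegral_indicator (ht i) (g i)

lemma box_evalE (n : ℕ) (p : Fin n → ℝ) (t : Fin n → Set ℝ) (ht : ∀ i, MeasurableSet (t i))
    (ht0 : ∀ i, t i ⊆ Set.Ioi 0) :
    ∫⁻ y in {y : EuclideanSpace ℝ (Fin n) | ∀ i, y i ∈ t i},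
        ENNReal.ofReal (∏ i, (y i) ^ (p i)) ∂(volume : Measure (EuclideanSpace ℝ (Fin n))) =
      ∏ i, ∫⁻ u in t i, ENNReal.ofReal (u ^ (p i)) := by
  rw [← (PiLp.volume_preserving_toLp (Fin n)).setLIntegral_comp_preimage_emb
    (MeasurableEquiv.toLp 2 (Fin n → ℝ)).measurableEmbedding]
  have hset : WithLp.toLp 2 ⁻¹' {y : EuclideanSpace ℝ (Fin n) | ∀ i, y i ∈ t i} = Set.univ.pi t := by
    ext y
    simp [Set.mem_univ_pi]
  rw [hset]
  have hB : MeasurableSet (Set.univ.pi t) := MeasurableSet.univ_pi ht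
  have hcongr : ∀ y ∈ Set.univ.pi t,
      ENNReal.ofReal (∏ i, (y i : ℝ) ^ (p i)) = ∏ i, ENNReal.ofReal ((y i) ^ (p i)) := by
    intro y hy
    exact ENNReal.ofReal_prod_of_nonneg fun i _ =>
      Real.rpow_nonneg (le_of_lt (ht0 i (hy i (Set.mem_univ i)))) _
  calc ∫⁻ y in Set.univ.pi t, ENNReal.ofReal (∏ i, (y i : ℝ) ^ (p i))
        ∂(volume : Measure (Fin n → ℝ))
      = ∫⁻ y in Set.univ.pi t, (∏ i, ENNReal.ofReal ((y i : ℝ) ^ (p i)))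
          ∂(volume : Measure (Fin n → ℝ)) :=
        setLIntegral_congr_fun hB hcongr
    _ = ∏ i, ∫⁻ u in t i, ENNReal.ofReal (u ^ (p i)) :=
        box_eval n (fun i u => ENNReal.ofReal (u ^ p i))
          (fun i => Measurable.ennreal_ofReal (by fun_prop)) t ht

lemma prod_split (d : ℕ) (A : Fin d → ℝ) (r : ℝ) (B : Fin d → ℝ) :
    ∏ i, (A i * r * B i) = (∏ i, A i) * r ^ d * ∏ i, B i := by
  rw [Finset.prod_mul_distrib, Finset.prod_mul_distrib, Finset.prod_const, Finset.card_univ,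
    Fintype.card_fin]

theorem stmt_0 (d : ℕ) (hd : 1 ≤ d) (α : Fin d → ℝ) (hα : ∀ i, -1 < α i) :
    ∃ c C : ℝ, 0 < c ∧ c ≤ C ∧
      ∀ (x : EuclideanSpace ℝ (Fin d)) (r : ℝ), (∀ i, 0 < x i) → 0 < r →
        ENNReal.ofReal (c * r ^ d * ∏ i, (x i + r) ^ (2 * α i + 1)) ≤
          (((volume : Measure (EuclideanSpace ℝ (Fin d))).restrict
              {y : EuclideanSpace ℝ (Fin d) | ∀ i, 0 < y i}).withDensity
            (fun y => ENNReal.ofReal (∏ i, y i ^ (2 * α i + 1)))) (Metric.ball x r) ∧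
        (((volume : Measure (EuclideanSpace ℝ (Fin d))).restrict
              {y : EuclideanSpace ℝ (Fin d) | ∀ i, 0 < y i}).withDensity
            (fun y => ENNReal.ofReal (∏ i, y i ^ (2 * α i + 1)))) (Metric.ball x r) ≤
          ENNReal.ofReal (C * r ^ d * ∏ i, (x i + r) ^ (2 * α i + 1)) := by
  classical
  have hp : ∀ i, -1 < 2 * α i + 1 := fun i => by linarith [hα i]
  choose c₁ C₁ hc₁ hcC₁ hbound using fun i => oneD (2 * α i + 1) (hp i)
  have hC₁ : ∀ i, 0 < C₁ i := fun i => lt_of_lt_of_le (hc₁ i) (hcC₁ i)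
  set sd : ℝ := Real.sqrt d with hsd
  have hd0 : (0:ℝ) < d := by exact_mod_cast hd
  have hsd0 : 0 < sd := Real.sqrt_pos.mpr hd0
  have hsd1 : (1:ℝ) ≤ sd := by
    rw [show (1:ℝ) = Real.sqrt 1 by simp]
    exact Real.sqrt_le_sqrt (by exact_mod_cast hd)
  set A : Fin d → ℝ := fun i => c₁ i * sd ^ (-|2 * α i + 1|) / sd with hA
  have hApos : ∀ i, 0 < A i := fun i => by
    have : (0:ℝ) < sd ^ (-|2 * α i + 1|) := Real.rpow_pos_of_pos hsd0 _
    have := hc₁ i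
    positivity
  set clow : ℝ := ∏ i, A i with hclow
  have hclowpos : 0 < clow := Finset.prod_pos fun i _ => hApos i
  set Cbig : ℝ := ∏ i, C₁ i with hCbig
  have hCbigpos : 0 < Cbig := Finset.prod_pos fun i _ => hC₁ i
  refine ⟨min clow Cbig, Cbig, lt_min hclowpos hCbigpos, min_le_right _ _, ?_⟩
  intro x r hx hr
  set S : Set (EuclideanSpace ℝ (Fin d)) := {y | ∀ i, 0 < y i} with hSdef
  have hS : MeasurableSet S := by
    have : S = ⋂ i, (fun y : EuclideanSpace ℝ (Fin d) => y i) ⁻¹' Set.Ioi 0 := by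
      ext y; simp [hSdef]
    rw [this]
    exact MeasurableSet.iInter fun i => (by fun_prop : Continuous fun y : EuclideanSpace ℝ (Fin d) => y i).measurable measurableSet_Ioi
  have hrsd : 0 < r / sd := by positivity
  set tIn : Fin d → Set ℝ := fun i => Set.Ioo (x i - r / sd) (x i + r / sd) ∩ Set.Ioi 0 with htIn
  set tOut : Fin d → Set ℝ := fun i => Set.Ioo (x i - r) (x i + r) ∩ Set.Ioi 0 with htOut
  -- measure expansion
  have hMball : (((volume : Measure (EuclideanSpace ℝ (Fin d))).restrict S).withDensity
      (fun y => ENNReal.ofReal (∏ i, y i ^ (2 * α i + 1)))) (Metric.ball x r) =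
      ∫⁻ y in Metric.ball x r ∩ S,
        ENNReal.ofReal (∏ i, y i ^ (2 * α i + 1)) ∂(volume : Measure (EuclideanSpace ℝ (Fin d))) := by
    rw [← restrict_withDensity hS, Measure.restrict_apply measurableSet_ball,
      withDensity_apply _ ((measurableSet_ball.inter hS))]
  -- geometric inclusions
  have hsub1 : {y : EuclideanSpace ℝ (Fin d) | ∀ i, y i ∈ tIn i} ⊆ Metric.ball x r ∩ S := by
    intro y hy
    constructor
    · rw [Metric.mem_ball, EuclideanSpace.dist_eq]
      have hne : Nonempty (Fin d) := ⟨⟨0, hd⟩⟩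
      have hsum : (∑ i, dist (y i) (x i) ^ 2) < r ^ 2 := by
        have hlt : ∀ i, dist (y i) (x i) ^ 2 < (r / sd) ^ 2 := by
          intro i
          have h1 := (hy i).1
          have habs : |y i - x i| < r / sd := abs_sub_lt_iff.mpr ⟨by linarith [h1.2], by linarith [h1.1]⟩
          rw [Real.dist_eq]
          exact pow_lt_pow_left₀ habs (abs_nonneg _) two_ne_zero
        calc (∑ i, dist (y i) (x i) ^ 2) < ∑ _i : Fin d, (r / sd) ^ 2 :=
              Finset.sum_lt_sum_of_nonempty Finset.univ_nonempty fun i _ => hlt i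
          _ = d * (r / sd) ^ 2 := by rw [Finset.sum_const, Finset.card_univ, Fintype.card_fin]; ring
          _ = r ^ 2 := by
              rw [div_pow, hsd, Real.sq_sqrt hd0.le]
              field_simp
      exact (Real.sqrt_lt' hr).mpr hsum
    · exact fun i => (hy i).2
  have hsub2 : Metric.ball x r ∩ S ⊆ {y : EuclideanSpace ℝ (Fin d) | ∀ i, y i ∈ tOut i} := by
    rintro y ⟨hyb, hyS⟩ i
    have h1 : dist (y i) (x i) ≤ dist y x := by
      rw [EuclideanSpace.dist_eq]
      have h2 : dist (y i) (x i) ^ 2 ≤ ∑ j, dist (y j) (x j) ^ 2 :=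
        Finset.single_le_sum (f := fun j => dist (y j) (x j) ^ 2)
          (fun j _ => sq_nonneg _) (Finset.mem_univ i)
      calc dist (y i) (x i) = Real.sqrt (dist (y i) (x i) ^ 2) := (Real.sqrt_sq dist_nonneg).symm
        _ ≤ Real.sqrt (∑ j, dist (y j) (x j) ^ 2) := Real.sqrt_le_sqrt h2
    rw [Metric.mem_ball] at hyb
    have h3 : |y i - x i| < r := by rw [← Real.dist_eq]; exact lt_of_le_of_lt h1 hyb
    obtain ⟨h4, h5⟩ := abs_sub_lt_iff.mp h3
    exact ⟨⟨by linarith, by linarith⟩, hyS i⟩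
  -- box values
  have hvalIn : ∫⁻ y in {y : EuclideanSpace ℝ (Fin d) | ∀ i, y i ∈ tIn i},
      ENNReal.ofReal (∏ i, y i ^ (2 * α i + 1)) ∂(volume : Measure (EuclideanSpace ℝ (Fin d))) =
      ∏ i, ∫⁻ u in tIn i, ENNReal.ofReal (u ^ (2 * α i + 1)) :=
    box_evalE d _ tIn (fun i => (measurableSet_Ioo.inter measurableSet_Ioi))
      (fun i => Set.inter_subset_right)
  have hvalOut : ∫⁻ y in {y : EuclideanSpace ℝ (Fin d) | ∀ i, y i ∈ tOut i},
      ENNReal.ofReal (∏ i, y i ^ (2 * α i + 1)) ∂(volume : Measure (EuclideanSpace ℝ (Fin d))) =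
      ∏ i, ∫⁻ u in tOut i, ENNReal.ofReal (u ^ (2 * α i + 1)) :=
    box_evalE d _ tOut (fun i => (measurableSet_Ioo.inter measurableSet_Ioi))
      (fun i => Set.inter_subset_right)
  have hrpow_pos : ∀ i, (0:ℝ) < (x i + r) ^ (2 * α i + 1) :=
    fun i => Real.rpow_pos_of_pos (by linarith [hx i]) _
  constructor
  · -- lower bound
    rw [hMball]
    calc ENNReal.ofReal (min clow Cbig * r ^ d * ∏ i, (x i + r) ^ (2 * α i + 1))
        ≤ ENNReal.ofReal (∏ i, (c₁ i * (r / sd) * (x i + (r / sd)) ^ (2 * α i + 1))) := by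
          apply ENNReal.ofReal_le_ofReal
          have step1 : min clow Cbig * r ^ d * ∏ i, (x i + r) ^ (2 * α i + 1) ≤
              clow * r ^ d * ∏ i, (x i + r) ^ (2 * α i + 1) := by
            have h0 : (0:ℝ) ≤ r ^ d * ∏ i, (x i + r) ^ (2 * α i + 1) := by
              have : (0:ℝ) ≤ ∏ i, (x i + r) ^ (2 * α i + 1) :=
                Finset.prod_nonneg fun i _ => (hrpow_pos i).le
              positivity
            have := min_le_left clow Cbig
            nlinarith
          have step2 : clow * r ^ d * ∏ i, (x i + r) ^ (2 * α i + 1) =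
              ∏ i, (A i * r * (x i + r) ^ (2 * α i + 1)) := (prod_split d A r _).symm
          have step3 : ∏ i, (A i * r * (x i + r) ^ (2 * α i + 1)) ≤
              ∏ i, (c₁ i * (r / sd) * (x i + (r / sd)) ^ (2 * α i + 1)) := by
            apply Finset.prod_le_prod
            · intro i _
              have := hApos i
              have := hrpow_pos i
              positivity
            · intro i _
              have hcomp : sd ^ (-|2 * α i + 1|) * (x i + r) ^ (2 * α i + 1) ≤
                  (x i + (r / sd)) ^ (2 * α i + 1) := by
                apply comp_low (2 * α i + 1) sd (x i + r / sd) (x i + r) hsd1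
                · have := hx i; positivity
                · have : r / sd ≤ r := by
                    rw [div_le_iff₀ hsd0]; nlinarith
                  linarith
                · have h7 : sd * (x i + r / sd) = sd * x i + r := by field_simp
                  have h8 : x i ≤ sd * x i := by nlinarith [hx i]
                  linarith
              have h9 := hc₁ i
              have hk : (0:ℝ) ≤ c₁ i * (r / sd) := by positivity
              calc A i * r * (x i + r) ^ (2 * α i + 1)
                  = (c₁ i * (r / sd)) * (sd ^ (-|2 * α i + 1|) * (x i + r) ^ (2 * α i + 1)) := by
                    rw [hA]; field_simp
                _ ≤ (c₁ i * (r / sd)) * (x i + (r / sd)) ^ (2 * α i + 1) :=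
                    mul_le_mul_of_nonneg_left hcomp hk
                _ = c₁ i * (r / sd) * (x i + (r / sd)) ^ (2 * α i + 1) := by ring
          linarith
      _ = ∏ i, ENNReal.ofReal (c₁ i * (r / sd) * (x i + (r / sd)) ^ (2 * α i + 1)) := by
          apply ENNReal.ofReal_prod_of_nonneg
          intro i _
          have := hc₁ i
          have : (0:ℝ) < (x i + r / sd) ^ (2 * α i + 1) :=
            Real.rpow_pos_of_pos (by have := hx i; positivity) _
          positivity
      _ ≤ ∏ i, ∫⁻ u in tIn i, ENNReal.ofReal (u ^ (2 * α i + 1)) := by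
          apply Finset.prod_le_prod'
          intro i _
          exact (hbound i (x i) (r / sd) (hx i) hrsd).1
      _ = ∫⁻ y in {y : EuclideanSpace ℝ (Fin d) | ∀ i, y i ∈ tIn i},
            ENNReal.ofReal (∏ i, y i ^ (2 * α i + 1))
            ∂(volume : Measure (EuclideanSpace ℝ (Fin d))) := hvalIn.symm
      _ ≤ ∫⁻ y in Metric.ball x r ∩ S, ENNReal.ofReal (∏ i, y i ^ (2 * α i + 1))
            ∂(volume : Measure (EuclideanSpace ℝ (Fin d))) := lintegral_mono_set hsub1
  · -- upper bound
    rw [hMball]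
    calc ∫⁻ y in Metric.ball x r ∩ S, ENNReal.ofReal (∏ i, y i ^ (2 * α i + 1))
          ∂(volume : Measure (EuclideanSpace ℝ (Fin d)))
        ≤ ∫⁻ y in {y : EuclideanSpace ℝ (Fin d) | ∀ i, y i ∈ tOut i},
            ENNReal.ofReal (∏ i, y i ^ (2 * α i + 1))
            ∂(volume : Measure (EuclideanSpace ℝ (Fin d))) := lintegral_mono_set hsub2
      _ = ∏ i, ∫⁻ u in tOut i, ENNReal.ofReal (u ^ (2 * α i + 1)) := hvalOut
      _ ≤ ∏ i, ENNReal.ofReal (C₁ i * r * (x i + r) ^ (2 * α i + 1)) := by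
          apply Finset.prod_le_prod'
          intro i _
          exact (hbound i (x i) r (hx i) hr).2
      _ = ENNReal.ofReal (∏ i, (C₁ i * r * (x i + r) ^ (2 * α i + 1))) := by
          rw [ENNReal.ofReal_prod_of_nonneg]
          intro i _
          have := hC₁ i
          have := hrpow_pos i
          positivity
      _ = ENNReal.ofReal (Cbig * r ^ d * ∏ i, (x i + r) ^ (2 * α i + 1)) := by
          rw [prod_split d C₁ r _]
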